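/- In a simple graph with n vertices and maximum degree at most 3, if m_3 denotes the number of edges with exactly 3 neighboring edges, m_4 the number of edges with exactly 4 neighboring edges, and every edge has exactly 3 or 4 neighboring edges, then m_3 = (6/5)n - (4/5)m_4. -/

import Mathlib

open Finset

/-- The number of edges neighboring an edge: `deg u + deg v - 2` for the edge `s(u,v)`. -/
def edgeNbrs {V : Type} [Fintype V] [DecidableEq V] (G : SimpleGraph V) [DecidableRel G.Adj] :
    Sym2 V → ℕ :=
  Sym2.lift ⟨fun a b => G.degree a + G.degree b - 2, fun a b => by simp [add_comm]⟩

/-- In a graph with `n` vertices, maximum degree at most 3, no isolated vertices, in which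
every edge has exactly 3 or exactly 4 neighboring edges, the number `m₃` of edges with 3
neighbors satisfies `m₃ = (6/5)n - (4/5)m₄`, `m₄` being the number of edges with 4 neighbors. -/
theorem stmt4 {V : Type} [Fintype V] [DecidableEq V] (G : SimpleGraph V) [DecidableRel G.Adj]
    (hmax : ∀ v, G.degree v ≤ 3)
    (hmin : ∀ v, 1 ≤ G.degree v)
    (hnb : ∀ e ∈ G.edgeFinset, edgeNbrs G e = 3 ∨ edgeNbrs G e = 4) :
    ((G.edgeFinset.filter (fun e => edgeNbrs G e = 3)).card : ℚ) =
      6 / 5 * (Fintype.card V : ℚ) -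
        4 / 5 * ((G.edgeFinset.filter (fun e => edgeNbrs G e = 4)).card : ℚ) := by
  -- every vertex has degree 2 or 3
  have hdeg : ∀ v, G.degree v = 2 ∨ G.degree v = 3 := by
    intro v
    have h1 := hmin v
    have h3 := hmax v
    obtain ⟨u, hu⟩ := Finset.card_pos.mp (h1 : 0 < G.degree v)
    rw [SimpleGraph.mem_neighborFinset] at hu
    have he : s(v, u) ∈ G.edgeFinset := SimpleGraph.mem_edgeFinset.mpr hu
    have := hnb _ he
    simp only [edgeNbrs, Sym2.lift_mk] at this
    have h3u := hmax u
    omega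
  -- sum over darts of degree of fst, fiberwise over fst
  have key1 : ∑ d : G.Dart, G.degree d.fst = ∑ v, G.degree v * G.degree v := by
    rw [← Finset.sum_fiberwise_of_maps_to (g := fun d : G.Dart => d.fst) (t := Finset.univ)
      (fun d _ => Finset.mem_univ _)]
    refine Finset.sum_congr rfl fun v _ => ?_
    have hcard : (univ.filter (fun d : G.Dart => d.fst = v)).card = G.degree v := by
      have := G.dart_fst_fiber_card_eq_degree v
      simpa [Set.toFinset_setOf] using this
    rw [show ∑ d ∈ univ.filter (fun d : G.Dart => d.fst = v), G.degree d.fst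
        = ∑ _d ∈ univ.filter (fun d : G.Dart => d.fst = v), G.degree v from
      Finset.sum_congr rfl (fun d hd => by rw [(Finset.mem_filter.mp hd).2]),
      Finset.sum_const, hcard, smul_eq_mul]
  -- fiberwise over edge
  have key2 : ∑ d : G.Dart, G.degree d.fst
      = ∑ e ∈ G.edgeFinset, (edgeNbrs G e + 2) := by
    rw [← Finset.sum_fiberwise_of_maps_to (g := fun d : G.Dart => d.edge)
      (fun d _ => SimpleGraph.mem_edgeFinset.mpr d.edge_mem)]
    refine Finset.sum_congr rfl fun e he => ?_
    rw [SimpleGraph.mem_edgeFinset] at he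
    induction e with
    | _ u v =>
      have hadj : G.Adj u v := he
      let d : G.Dart := ⟨(u, v), hadj⟩
      have hfib : (univ.filter (fun d' : G.Dart => d'.edge = s(u, v))) = {d, d.symm} := by
        have := d.edge_fiber
        have h2 : (univ.filter (fun d' : G.Dart => d'.edge = d.edge)) = {d, d.symm} := by
          simpa [Set.toFinset_setOf] using this
        exact h2
      rw [hfib, Finset.sum_pair (by exact d.symm_ne.symm)]
      have hne : u ≠ v := hadj.ne
      have h2u := hdeg u
      have h2v := hdeg v
      simp only [edgeNbrs, Sym2.lift_mk]
      show G.degree u + G.degree v = _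
      omega
  -- arithmetic
  set m3 := (G.edgeFinset.filter (fun e => edgeNbrs G e = 3)).card with hm3
  set m4 := (G.edgeFinset.filter (fun e => edgeNbrs G e = 4)).card with hm4
  have hne34 : G.edgeFinset.filter (fun e => ¬ edgeNbrs G e = 3)
      = G.edgeFinset.filter (fun e => edgeNbrs G e = 4) := by
    apply Finset.filter_congr
    intro e he
    rcases hnb e he with h | h <;> simp [h]
  have hsplit : m3 + m4 = G.edgeFinset.card := by
    rw [hm3, hm4, ← hne34]
    exact Finset.card_filter_add_card_filter_not _
  have hsum34 : ∑ e ∈ G.edgeFinset, edgeNbrs G e = 3 * m3 + 4 * m4 := by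
    rw [← Finset.sum_filter_add_sum_filter_not G.edgeFinset (fun e => edgeNbrs G e = 3)]
    congr 1
    · rw [Finset.sum_congr rfl (fun e he => (Finset.mem_filter.mp he).2),
        Finset.sum_const, smul_eq_mul, mul_comm]
    · rw [hne34, Finset.sum_congr rfl (fun e he => (Finset.mem_filter.mp he).2),
        Finset.sum_const, smul_eq_mul, mul_comm]
  have hdegsq : ∑ v, G.degree v * G.degree v + 6 * Fintype.card V = 5 * ∑ v, G.degree v := by
    rw [Finset.mul_sum, ← Finset.card_univ, Finset.card_eq_sum_ones, Finset.mul_sum,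
      ← Finset.sum_add_distrib]
    refine Finset.sum_congr rfl fun v _ => ?_
    rcases hdeg v with h | h <;> rw [h] <;> norm_num
  have hhand : ∑ v, G.degree v = 2 * G.edgeFinset.card :=
    G.sum_degrees_eq_twice_card_edges
  have hsum2 : ∑ e ∈ G.edgeFinset, (edgeNbrs G e + 2)
      = 3 * m3 + 4 * m4 + 2 * G.edgeFinset.card := by
    rw [Finset.sum_add_distrib, hsum34, Finset.sum_const, smul_eq_mul]
    ring
  have main : 5 * m3 + 4 * m4 = 6 * Fintype.card V := by
    have := key1.symm.trans key2
    omega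
  have : (5 : ℚ) * m3 + 4 * m4 = 6 * Fintype.card V := by
    exact_mod_cast congrArg (Nat.cast : ℕ → ℚ) main
  linarith
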